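/- For m odd with 1 ≤ m ≤ n, the 4×4 matrices R = [[-iX, Z^{(m+1)/2}, -Y, 0],[Z^{n+1-(m+1)/2}, iX, 0, -Y],[-YZ, 0, -iX, Z^{(m+1)/2}],[0, -YZ, Z^{n+1-(m+1)/2}, iX]] and S = [[-iX, Z^{(m+1)/2}, Y, 0],[Z^{n+1-(m+1)/2}, iX, 0, Y],[YZ, 0, -iX, Z^{(m+1)/2}],[0, YZ, Z^{n+1-(m+1)/2}, iX]] over ℂ[X,Y,Z] satisfy S·R = R·S = (-X² - Y²Z + Z^{n+1})·I₄. -/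

import Mathlib

open MvPolynomial

set_option maxHeartbeats 2000000 in
/-- For `m` odd with `1 ≤ m ≤ n`, the 4×4 matrices `R` and `S` over `ℂ[X,Y,Z]`
built from `X, Y, Z^{(m+1)/2}, Z^{n+1-(m+1)/2}` give a matrix factorization of the
`D_{n+2}` equation: `S·R = R·S = (-X² - Y²Z + Z^{n+1})·I₄`. -/
theorem stmt12 (n m : ℕ) (hm : Odd m) (hm1 : 1 ≤ m) (hmn : m ≤ n) :
    let Xv : MvPolynomial (Fin 3) ℂ := X 0
    let Yv : MvPolynomial (Fin 3) ℂ := X 1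
    let Zv : MvPolynomial (Fin 3) ℂ := X 2
    let i : MvPolynomial (Fin 3) ℂ := MvPolynomial.C Complex.I
    let R : Matrix (Fin 4) (Fin 4) (MvPolynomial (Fin 3) ℂ) :=
      !![-(i * Xv), Zv ^ ((m + 1) / 2), -Yv, 0;
         Zv ^ (n + 1 - (m + 1) / 2), i * Xv, 0, -Yv;
         -(Yv * Zv), 0, -(i * Xv), Zv ^ ((m + 1) / 2);
         0, -(Yv * Zv), Zv ^ (n + 1 - (m + 1) / 2), i * Xv]
    let S : Matrix (Fin 4) (Fin 4) (MvPolynomial (Fin 3) ℂ) :=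
      !![-(i * Xv), Zv ^ ((m + 1) / 2), Yv, 0;
         Zv ^ (n + 1 - (m + 1) / 2), i * Xv, 0, Yv;
         Yv * Zv, 0, -(i * Xv), Zv ^ ((m + 1) / 2);
         0, Yv * Zv, Zv ^ (n + 1 - (m + 1) / 2), i * Xv]
    S * R = (-Xv ^ 2 - Yv ^ 2 * Zv + Zv ^ (n + 1)) •
        (1 : Matrix (Fin 4) (Fin 4) (MvPolynomial (Fin 3) ℂ)) ∧
    R * S = (-Xv ^ 2 - Yv ^ 2 * Zv + Zv ^ (n + 1)) •
        (1 : Matrix (Fin 4) (Fin 4) (MvPolynomial (Fin 3) ℂ)) := by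
  intro Xv Yv Zv i R S
  have hk : (m + 1) / 2 + (n + 1 - (m + 1) / 2) = n + 1 := by
    have : (m + 1) / 2 ≤ n + 1 := le_trans (Nat.div_le_self _ _) (by omega)
    omega
  have hZ : Zv ^ ((m + 1) / 2) * Zv ^ (n + 1 - (m + 1) / 2) = Zv ^ (n + 1) := by
    rw [← pow_add, hk]
  have hZ' : Zv ^ (n + 1 - (m + 1) / 2) * Zv ^ ((m + 1) / 2) = Zv ^ (n + 1) := by
    rw [← pow_add]; rw [Nat.add_comm, hk]
  have hI : i * i = -1 := by
    simp only [i, ← C_mul, Complex.I_mul_I, map_neg, map_one]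
  constructor <;>
  · refine Matrix.ext fun a b => ?_
    fin_cases a <;> fin_cases b <;>
      simp only [R, S, Matrix.mul_apply, Fin.sum_univ_four, Matrix.smul_apply,
        Matrix.one_apply, Matrix.cons_val', Matrix.cons_val_zero, Matrix.cons_val_one,
        Matrix.head_cons, Matrix.head_fin_const, Matrix.cons_val_fin_one,
        Matrix.empty_val', Matrix.cons_val_succ, Fin.isValue, smul_eq_mul,
        if_true, if_false, Fin.mk_one, Fin.zero_eta, Matrix.head_val',
        show ((0:Fin 4) ≠ 1) from by decide, show ((0:Fin 4) ≠ 2) from by decide] <;>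
      norm_num [Matrix.one_apply, Fin.ext_iff] <;>
      simp [Matrix.vecHead, Matrix.vecTail] <;>
      first | ring1 | linear_combination (Xv ^ 2) * hI + hZ
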